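/- Let $S=K[x_1,\dots,x_n,y_1,\dots,y_m]$ and let $I_q J_r$ be the product of the ideal generated by all squarefree monomials of degree $q$ in the $x$-variables with the ideal generated by all squarefree monomials of degree $r$ in the $y$-variables, where $1\le q\le n$ and $1\le r\le m$. Then the Alexander dual of $I_q J_r$ equals $I_{n-q+1} + J_{m-r+1}$. -/

import Mathlib

open MvPolynomial

/-- The squarefree Veronese ideal of degree `q` in the `x`-variables of
`K[x_1,…,x_n,y_1,…,y_m]`: it is generated by all squarefree monomials of
degree `q` in `x_1,…,x_n`. -/
noncomputable def mixedI (n m : ℕ) (K : Type*) [Field K] (q : ℕ) :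
    Ideal (MvPolynomial (Fin n ⊕ Fin m) K) :=
  Ideal.span {p | ∃ A : Finset (Fin n), A.card = q ∧ p = ∏ i ∈ A, X (Sum.inl i)}

/-- The squarefree Veronese ideal of degree `r` in the `y`-variables. -/
noncomputable def mixedJ (n m : ℕ) (K : Type*) [Field K] (r : ℕ) :
    Ideal (MvPolynomial (Fin n ⊕ Fin m) K) :=
  Ideal.span {p | ∃ B : Finset (Fin m), B.card = r ∧ p = ∏ j ∈ B, X (Sum.inr j)}

/-- The Alexander dual of a squarefree monomial ideal `I` in
`K[x_i : i ∈ σ]`: it is generated by the squarefree monomials `∏_{i ∈ S} x_i`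
such that the complementary squarefree monomial `∏_{i ∉ S} x_i` does not lie
in `I`.  For a squarefree monomial ideal `I = I_Δ` this coincides with the
classical Alexander dual `⋂ 𝔪_α` over the minimal generators `x^α` of `I`. -/
noncomputable def alexDual {σ : Type*} [Fintype σ] [DecidableEq σ] {K : Type*} [Field K]
    (I : Ideal (MvPolynomial σ K)) : Ideal (MvPolynomial σ K) :=
  Ideal.span {p | ∃ S : Finset σ, (∏ i ∈ Sᶜ, (X i : MvPolynomial σ K)) ∉ I ∧
    p = ∏ i ∈ S, X i}

noncomputable section AlexAux

variable {σ : Type*} [Fintype σ] [DecidableEq σ] {K : Type*} [Field K]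

def expOf (S : Finset σ) : σ →₀ ℕ := ∑ i ∈ S, Finsupp.single i 1

lemma expOf_apply (S : Finset σ) (j : σ) : expOf S j = if j ∈ S then 1 else 0 := by
  classical
  simp [expOf, Finsupp.finset_sum_apply, Finsupp.single_apply]

lemma expOf_le_iff {S T : Finset σ} : expOf S ≤ expOf T ↔ S ⊆ T := by
  constructor
  · intro h i hi
    have := h i
    rw [expOf_apply, expOf_apply, if_pos hi] at this
    by_contra hT
    rw [if_neg hT] at this
    omega
  · intro h i
    rw [expOf_apply, expOf_apply]
    by_cases hi : i ∈ S
    · rw [if_pos hi, if_pos (h hi)]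
    · simp [hi]

lemma prodX_eq (S : Finset σ) : (∏ i ∈ S, X i : MvPolynomial σ K) = monomial (expOf S) 1 := by
  classical
  induction S using Finset.induction_on with
  | empty => simp [expOf]
  | @insert a s h ih =>
    rw [Finset.prod_insert h, ih, show (X a : MvPolynomial σ K) = monomial (Finsupp.single a 1) 1
        from (pow_one (X a : MvPolynomial σ K)) ▸ X_pow_eq_monomial,
      monomial_mul, one_mul]
    congr 1
    rw [expOf, expOf, Finset.sum_insert h]

lemma prodX_mem_span_iff {𝒢 : Set (Finset σ)} {T : Finset σ} :
    (∏ i ∈ T, X i : MvPolynomial σ K) ∈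
      Ideal.span {p : MvPolynomial σ K | ∃ S ∈ 𝒢, p = ∏ i ∈ S, X i} ↔ ∃ S ∈ 𝒢, S ⊆ T := by
  have hset : {p : MvPolynomial σ K | ∃ S ∈ 𝒢, p = ∏ i ∈ S, X i}
      = (fun s => monomial s (1 : K)) '' (expOf '' 𝒢) := by
    ext p
    constructor
    · rintro ⟨S, hS, rfl⟩
      exact ⟨expOf S, ⟨S, hS, rfl⟩, (prodX_eq S).symm⟩
    · rintro ⟨s, ⟨S, hS, rfl⟩, rfl⟩
      exact ⟨S, hS, (prodX_eq S).symm⟩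
  rw [hset, prodX_eq, mem_ideal_span_monomial_image]
  classical
  rw [support_monomial, if_neg (one_ne_zero)]
  constructor
  · intro h
    obtain ⟨si, ⟨S, hS, rfl⟩, hle⟩ := h (expOf T) (Finset.mem_singleton_self _)
    exact ⟨S, hS, expOf_le_iff.mp hle⟩
  · rintro ⟨S, hS, hsub⟩ xi hxi
    rw [Finset.mem_singleton] at hxi
    subst hxi
    exact ⟨expOf S, ⟨S, hS, rfl⟩, expOf_le_iff.mpr hsub⟩

end AlexAux

section Mixed

variable {n m : ℕ} {K : Type*} [Field K]

def Tx (T : Finset (Fin n ⊕ Fin m)) : Finset (Fin n) :=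
  Finset.univ.filter (fun i => Sum.inl i ∈ T)

def Ty (T : Finset (Fin n ⊕ Fin m)) : Finset (Fin m) :=
  Finset.univ.filter (fun j => Sum.inr j ∈ T)

lemma mem_Tx {T : Finset (Fin n ⊕ Fin m)} {i : Fin n} : i ∈ Tx T ↔ Sum.inl i ∈ T := by
  simp [Tx]

lemma mem_Ty {T : Finset (Fin n ⊕ Fin m)} {j : Fin m} : j ∈ Ty T ↔ Sum.inr j ∈ T := by
  simp [Ty]

lemma mapInl_subset_iff {A : Finset (Fin n)} {T : Finset (Fin n ⊕ Fin m)} :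
    A.map (Function.Embedding.inl) ⊆ T ↔ A ⊆ Tx T := by
  constructor
  · intro h i hi
    exact mem_Tx.mpr (h (by simp [Finset.mem_map, hi]))
  · intro h x hx
    obtain ⟨i, hi, rfl⟩ := Finset.mem_map.mp hx
    exact mem_Tx.mp (h hi)

lemma mapInr_subset_iff {B : Finset (Fin m)} {T : Finset (Fin n ⊕ Fin m)} :
    B.map (Function.Embedding.inr) ⊆ T ↔ B ⊆ Ty T := by
  constructor
  · intro h j hj
    exact mem_Ty.mpr (h (by simp [Finset.mem_map, hj]))
  · intro h x hx
    obtain ⟨j, hj, rfl⟩ := Finset.mem_map.mp hx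
    exact mem_Ty.mp (h hj)

lemma Tx_compl (T : Finset (Fin n ⊕ Fin m)) : Tx Tᶜ = (Tx T)ᶜ := by
  ext i; simp [mem_Tx, Finset.mem_compl]

lemma Ty_compl (T : Finset (Fin n ⊕ Fin m)) : Ty Tᶜ = (Ty T)ᶜ := by
  ext j; simp [mem_Ty, Finset.mem_compl]

lemma Tx_map_inl (A : Finset (Fin n)) :
    Tx (n := n) (m := m) (A.map Function.Embedding.inl) = A := by
  ext i; simp [mem_Tx]

lemma Ty_map_inl (A : Finset (Fin n)) :
    Ty (n := n) (m := m) (A.map Function.Embedding.inl) = ∅ := by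
  ext j; simp [mem_Ty]

lemma Tx_map_inr (B : Finset (Fin m)) :
    Tx (n := n) (m := m) (B.map Function.Embedding.inr) = ∅ := by
  ext i; simp [mem_Tx]

lemma Ty_map_inr (B : Finset (Fin m)) :
    Ty (n := n) (m := m) (B.map Function.Embedding.inr) = B := by
  ext j; simp [mem_Ty]

lemma disj_map (A : Finset (Fin n)) (B : Finset (Fin m)) :
    Disjoint (A.map Function.Embedding.inl) (B.map Function.Embedding.inr) := by
  rw [Finset.disjoint_left]
  rintro x hx hy
  obtain ⟨i, _, rfl⟩ := Finset.mem_map.mp hx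
  obtain ⟨j, _, h⟩ := Finset.mem_map.mp hy
  simp at h

lemma prod_map_inl (A : Finset (Fin n)) :
    (∏ i ∈ A.map Function.Embedding.inl, (X i : MvPolynomial (Fin n ⊕ Fin m) K))
      = ∏ i ∈ A, X (Sum.inl i) := by
  rw [Finset.prod_map]; rfl

lemma prod_map_inr (B : Finset (Fin m)) :
    (∏ i ∈ B.map Function.Embedding.inr, (X i : MvPolynomial (Fin n ⊕ Fin m) K))
      = ∏ j ∈ B, X (Sum.inr j) := by
  rw [Finset.prod_map]; rfl

lemma mixed_mul_eq (q r : ℕ) : mixedI n m K q * mixedJ n m K r =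
    Ideal.span {p : MvPolynomial (Fin n ⊕ Fin m) K |
      ∃ S ∈ {S : Finset (Fin n ⊕ Fin m) | ∃ (A : Finset (Fin n)) (B : Finset (Fin m)), A.card = q ∧ B.card = r ∧
        S = A.map Function.Embedding.inl ∪ B.map Function.Embedding.inr},
      p = ∏ i ∈ S, X i} := by
  rw [mixedI, mixedJ, Ideal.span_mul_span']
  congr 1
  ext p
  constructor
  · rintro ⟨p1, ⟨A, hA, rfl⟩, p2, ⟨B, hB, rfl⟩, rfl⟩
    refine ⟨_, ⟨A, B, hA, hB, rfl⟩, ?_⟩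
    rw [Finset.prod_union (disj_map A B), prod_map_inl, prod_map_inr]
  · rintro ⟨S, ⟨A, B, hA, hB, rfl⟩, rfl⟩
    refine ⟨∏ i ∈ A, X (Sum.inl i), ⟨A, hA, rfl⟩, ∏ j ∈ B, X (Sum.inr j), ⟨B, hB, rfl⟩, ?_⟩
    rw [Finset.prod_union (disj_map A B), prod_map_inl, prod_map_inr]

lemma prodX_mem_mixed_iff (q r : ℕ) (T : Finset (Fin n ⊕ Fin m)) :
    (∏ i ∈ T, X i : MvPolynomial (Fin n ⊕ Fin m) K) ∈ mixedI n m K q * mixedJ n m K r ↔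
      q ≤ (Tx T).card ∧ r ≤ (Ty T).card := by
  rw [mixed_mul_eq, prodX_mem_span_iff]
  constructor
  · rintro ⟨S, ⟨A, B, hA, hB, rfl⟩, hsub⟩
    have h1 : A ⊆ Tx T := mapInl_subset_iff.mp (Finset.union_subset_iff.mp hsub).1
    have h2 : B ⊆ Ty T := mapInr_subset_iff.mp (Finset.union_subset_iff.mp hsub).2
    exact ⟨hA ▸ Finset.card_le_card h1, hB ▸ Finset.card_le_card h2⟩
  · rintro ⟨hq, hr⟩
    obtain ⟨A, hAsub, hA⟩ := Finset.exists_subset_card_eq hq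
    obtain ⟨B, hBsub, hB⟩ := Finset.exists_subset_card_eq hr
    exact ⟨_, ⟨A, B, hA, hB, rfl⟩,
      Finset.union_subset (mapInl_subset_iff.mpr hAsub) (mapInr_subset_iff.mpr hBsub)⟩

end Mixed


/-- The Alexander dual of `I_q J_r` is `I_{n-q+1} + J_{m-r+1}`. -/
theorem alexDual_mixed_product (n m : ℕ) (K : Type*) [Field K] (q r : ℕ)
    (hq1 : 1 ≤ q) (hqn : q ≤ n) (hr1 : 1 ≤ r) (hrm : r ≤ m) :
    alexDual (mixedI n m K q * mixedJ n m K r) =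
      mixedI n m K (n - q + 1) + mixedJ n m K (m - r + 1) := by
  classical
  apply le_antisymm
  · rw [alexDual, Ideal.span_le]
    rintro p ⟨S, hnot, rfl⟩
    rw [prodX_mem_mixed_iff] at hnot
    rw [Tx_compl, Ty_compl, Finset.card_compl, Finset.card_compl, Fintype.card_fin,
      Fintype.card_fin] at hnot
    have hxle : (Tx S).card ≤ n := (Finset.card_le_univ _).trans (by simp)
    have hyle : (Ty S).card ≤ m := (Finset.card_le_univ _).trans (by simp)
    rw [SetLike.mem_coe]
    rcases or_iff_not_and_not.mpr (by omega :
        ¬(¬ n - q + 1 ≤ (Tx S).card ∧ ¬ m - r + 1 ≤ (Ty S).card)) with h | h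
    · obtain ⟨A, hAsub, hA⟩ := Finset.exists_subset_card_eq h
      have hmap : A.map Function.Embedding.inl ⊆ S := mapInl_subset_iff.mpr hAsub
      rw [← Finset.prod_sdiff hmap]
      apply Ideal.mem_sup_left
      apply Ideal.mul_mem_left
      rw [prod_map_inl]
      exact Ideal.subset_span ⟨A, hA, rfl⟩
    · obtain ⟨B, hBsub, hB⟩ := Finset.exists_subset_card_eq h
      have hmap : B.map Function.Embedding.inr ⊆ S := mapInr_subset_iff.mpr hBsub
      rw [← Finset.prod_sdiff hmap]
      apply Ideal.mem_sup_right
      apply Ideal.mul_mem_left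
      rw [prod_map_inr]
      exact Ideal.subset_span ⟨B, hB, rfl⟩
  · apply sup_le
    · rw [mixedI, Ideal.span_le]
      rintro p ⟨A, hA, rfl⟩
      rw [SetLike.mem_coe, alexDual]
      apply Ideal.subset_span
      refine ⟨A.map Function.Embedding.inl, ?_, (prod_map_inl A).symm⟩
      rw [prodX_mem_mixed_iff, Tx_compl, Finset.card_compl, Fintype.card_fin, Tx_map_inl, hA]
      omega
    · rw [mixedJ, Ideal.span_le]
      rintro p ⟨B, hB, rfl⟩
      rw [SetLike.mem_coe, alexDual]
      apply Ideal.subset_span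
      refine ⟨B.map Function.Embedding.inr, ?_, (prod_map_inr B).symm⟩
      rw [prodX_mem_mixed_iff, Ty_compl, Finset.card_compl, Fintype.card_fin, Ty_map_inr, hB]
      omega
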